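/- Let z ∈ ℂ with Im z ≥ 0 and let h ∈ ℍ^A satisfy the fixed point equation h_j = -1/(z + Σ_{k∈A} M_{j,k} h_k) for all j ∈ A, where M_{j,k} ∈ ℕ. Then for every j ∈ A: |h_j|² · Σ_k M_{j,k} Im h_k ≤ Im h_j. -/

import Mathlib

open Complex

/-- If `h ∈ ℍ^A` is a fixed point of `Φ_z`, i.e. `h_j = -1/(z + Σ_k M_{j,k} h_k)`,
with `Im z ≥ 0`, then `|h_j|² Σ_k M_{j,k} Im h_k ≤ Im h_j`. -/
theorem fixed_point_imaginary_bound {A : Type*} [Fintype A] [Nonempty A]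
    (M : A → A → ℕ) (z : ℂ) (hz : 0 ≤ z.im) (h : A → ℂ) (hh : ∀ j, 0 < (h j).im)
    (hfix : ∀ j, h j * (z + ∑ k, (M j k : ℂ) * h k) = -1) :
    ∀ j, ‖h j‖^2 * ∑ k, (M j k : ℝ) * (h k).im ≤ (h j).im := by
  intro j
  set w : ℂ := z + ∑ k, (M j k : ℂ) * h k with hw
  have key2 : ((Complex.normSq (h j) : ℝ) : ℂ) * w = -(starRingEnd ℂ) (h j) := by
    calc ((Complex.normSq (h j) : ℝ) : ℂ) * w
        = (starRingEnd ℂ) (h j) * (h j * w) := by rw [← Complex.mul_conj]; ring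
      _ = (starRingEnd ℂ) (h j) * (-1) := by rw [hfix j]
      _ = -(starRingEnd ℂ) (h j) := by ring
  have him : (Complex.normSq (h j)) * w.im = (h j).im := by
    have := congrArg Complex.im key2
    simpa using this
  have habs : ‖h j‖^2 = Complex.normSq (h j) := Complex.sq_norm _
  have hwim : w.im = z.im + ∑ k, (M j k : ℝ) * (h k).im := by
    simp [hw, Complex.add_im, Complex.im_sum]
  have hsum : ∑ k, (M j k : ℝ) * (h k).im ≤ w.im := by
    rw [hwim]; linarith
  have hnn : 0 ≤ Complex.normSq (h j) := Complex.normSq_nonneg _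
  calc ‖h j‖^2 * ∑ k, (M j k : ℝ) * (h k).im
      ≤ Complex.normSq (h j) * w.im := by rw [habs]; exact mul_le_mul_of_nonneg_left hsum hnn
    _ = (h j).im := him
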